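/- arXiv:2008.09235 — 2 statements merged into one kernel-verified Lean document; each statement's English description precedes it below -/
import Mathlib

section
/- Let p be a positive integer, T₁ > 0, a₁ > 0 and ε ∈ ℝ. Let f : (0,∞) × ℝ → ℂ be measurable, square-integrable on compact subsets, and satisfy f(a, t + p) = f(a, t) for all a > 0 and t ∈ ℝ. Then, as an inequality of values in [0,∞], ∫₀^{a₁} a^{2+ε} ⌊T₁/(p a²)⌋ (∫₀^{p} |f(a,t)|² dt) da/a ≤ ∫₀^{a₁} ∫₀^{T₁} a^{ε} |f(a, a^{−2} T)|² dT da/a ≤ ∫₀^{a₁} a^{2+ε} (⌊T₁/(p a²)⌋ + 1) (∫₀^{p} |f(a,t)|² dt) da/a, where ⌊·⌋ is the floor function. -/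
open MeasureTheory Real Set
open scoped ENNReal NNReal


lemma aux_translate (g : ℝ → ℝ≥0∞) (c : ℝ) (s : Set ℝ) :
    ∫⁻ x in s, g (x + c) = ∫⁻ y in (· + c) '' s, g y :=
  (measurePreserving_add_right volume c).setLIntegral_comp_emb
    (MeasurableEquiv.addRight c).measurableEmbedding g s

lemma aux_periodic_nat (g : ℝ → ℝ≥0∞) (P : ℝ) (hP : 0 < P)
    (hper : ∀ t, g (t + P) = g t) (n : ℕ) :
    ∫⁻ t in Ioc (0:ℝ) ((n : ℝ) * P), g t = n * ∫⁻ t in Ioc (0:ℝ) P, g t := by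
  induction n with
  | zero => simp
  | succ n ih =>
    have hiter : ∀ t, g (t + (n : ℝ) * P) = g t := by
      clear ih
      induction n with
      | zero => simp
      | succ m ihm =>
        intro t
        have h : t + ((m : ℝ) + 1) * P = t + (m : ℝ) * P + P := by ring
        rw [Nat.cast_succ, h, hper, ihm]
    have h1 : (0:ℝ) ≤ (n : ℝ) * P := by positivity
    have h2 : (n : ℝ) * P ≤ ((n : ℝ) + 1) * P := by nlinarith
    have hsplit : Ioc (0:ℝ) ((n : ℝ) * P) ∪ Ioc ((n : ℝ) * P) (((n : ℝ) + 1) * P)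
        = Ioc (0:ℝ) (((n : ℝ) + 1) * P) := Ioc_union_Ioc_eq_Ioc h1 h2
    have himg : (· + (n : ℝ) * P) '' Ioc (0:ℝ) P = Ioc ((n : ℝ) * P) (((n : ℝ) + 1) * P) := by
      rw [image_add_const_Ioc]
      congr 1 <;> ring
    have htrans : ∫⁻ t in Ioc ((n : ℝ) * P) (((n : ℝ) + 1) * P), g t
        = ∫⁻ t in Ioc (0:ℝ) P, g t := by
      rw [← himg, ← aux_translate]
      exact lintegral_congr fun t => hiter t
    rw [Nat.cast_succ, ← hsplit,
      lintegral_union measurableSet_Ioc (Set.Ioc_disjoint_Ioc_of_le le_rfl), ih, htrans]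
    push_cast
    ring

lemma aux_key (g : ℝ → ℝ≥0∞) (P : ℝ) (hP : 0 < P)
    (hper : ∀ t, g (t + P) = g t) (L : ℝ) (hL : 0 < L) :
    ((⌊L / P⌋.toNat : ℝ≥0∞)) * ∫⁻ t in Ioc (0:ℝ) P, g t ≤ ∫⁻ t in Ioc (0:ℝ) L, g t ∧
    ∫⁻ t in Ioc (0:ℝ) L, g t ≤ ((⌊L / P⌋.toNat : ℝ≥0∞) + 1) * ∫⁻ t in Ioc (0:ℝ) P, g t := by
  set n : ℕ := ⌊L / P⌋.toNat with hn
  have hfl0 : (0:ℤ) ≤ ⌊L / P⌋ := Int.floor_nonneg.2 (by positivity)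
  have hcast : ((n : ℤ)) = ⌊L / P⌋ := Int.toNat_of_nonneg hfl0
  have hnc : ((n : ℝ)) = (⌊L / P⌋ : ℝ) := by exact_mod_cast congrArg (Int.cast : ℤ → ℝ) hcast
  have hle1 : (n : ℝ) * P ≤ L := by
    rw [hnc]
    have := Int.floor_le (L / P)
    calc (⌊L / P⌋ : ℝ) * P ≤ (L / P) * P := by nlinarith
    _ = L := by field_simp
  have hle2 : L ≤ ((n : ℝ) + 1) * P := by
    have := (Int.lt_floor_add_one (L / P)).le
    rw [hnc]
    calc L = (L / P) * P := by field_simp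
    _ ≤ ((⌊L / P⌋ : ℝ) + 1) * P := by nlinarith
  constructor
  · rw [← aux_periodic_nat g P hP hper n]
    exact lintegral_mono_set (Ioc_subset_Ioc_right hle1)
  · have := aux_periodic_nat g P hP hper (n + 1)
    push_cast at this
    rw [← this]
    exact lintegral_mono_set (Ioc_subset_Ioc_right hle2)

lemma aux_scale (g : ℝ → ℝ≥0∞) (hg : Measurable g) (c T₁ : ℝ) (hc : 0 < c) :
    ∫⁻ T in Ioc (0:ℝ) T₁, g (c * T) = ENNReal.ofReal c⁻¹ * ∫⁻ t in Ioc (0:ℝ) (c * T₁), g t := by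
  have hmap : Measure.map (fun x : ℝ => c * x) volume
      = ENNReal.ofReal |c⁻¹| • volume := Real.map_volume_mul_left hc.ne'
  have hpre : (fun x : ℝ => c * x) ⁻¹' Ioc 0 (c * T₁) = Ioc (0:ℝ) T₁ := by
    ext x
    simp only [mem_preimage, mem_Ioc]
    constructor <;> (rintro ⟨h1, h2⟩; constructor <;> nlinarith)
  calc ∫⁻ T in Ioc (0:ℝ) T₁, g (c * T)
      = ∫⁻ T in (fun x : ℝ => c * x) ⁻¹' Ioc 0 (c * T₁), g (c * T) := by rw [hpre]
    _ = ∫⁻ t in Ioc (0:ℝ) (c * T₁), g t ∂(Measure.map (fun x : ℝ => c * x) volume) :=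
        (setLIntegral_map measurableSet_Ioc hg (measurable_const_mul c)).symm
    _ = ENNReal.ofReal c⁻¹ * ∫⁻ t in Ioc (0:ℝ) (c * T₁), g t := by
        rw [hmap, Measure.restrict_smul, lintegral_smul_measure, abs_of_pos (by positivity), smul_eq_mul]


/-- if `f : (0,∞) × ℝ → ℂ` is measurable, locally square-integrable, and
`p`-periodic in the second variable, then the `L²(P(T₁,a₁)⁻, a^ε (da/a) dT)`-norm of
`f(n_T d_a) = f(d_a n_{a⁻²T})` is squeezed between the integrals
`∫₀^{a₁} a^{2+ε} ⌊T₁/(p a²)⌋ (∫₀^p |f(a,t)|² dt) da/a` and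
`∫₀^{a₁} a^{2+ε} (⌊T₁/(p a²)⌋ + 1) (∫₀^p |f(a,t)|² dt) da/a`, in `[0,∞]`. -/
theorem stmt0 (p : ℕ) (hp : 0 < p) (T₁ : ℝ) (hT₁ : 0 < T₁) (a₁ : ℝ) (ha₁ : 0 < a₁) (ε : ℝ)
    (f : ℝ × ℝ → ℂ) (hf : Measurable f)
    (hloc : ∀ K : Set (ℝ × ℝ), IsCompact K → IntegrableOn (fun q => ‖f q‖ ^ 2) K volume)
    (hper : ∀ a : ℝ, 0 < a → ∀ t : ℝ, f (a, t + (p : ℝ)) = f (a, t)) :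
    (∫⁻ a in Ioc (0:ℝ) a₁,
        ENNReal.ofReal (a ^ ((2:ℝ) + ε) * ((⌊T₁ / ((p : ℝ) * a ^ 2)⌋ : ℤ) : ℝ)) *
          (∫⁻ t in Ioc (0:ℝ) (p : ℝ), (‖f (a, t)‖₊ : ℝ≥0∞) ^ 2) * ENNReal.ofReal a⁻¹)
      ≤ (∫⁻ a in Ioc (0:ℝ) a₁,
          (∫⁻ T in Ioc (0:ℝ) T₁,
            ENNReal.ofReal (a ^ ε) * (‖f (a, a ^ (-2 : ℤ) * T)‖₊ : ℝ≥0∞) ^ 2)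
            * ENNReal.ofReal a⁻¹) ∧
    (∫⁻ a in Ioc (0:ℝ) a₁,
        (∫⁻ T in Ioc (0:ℝ) T₁,
          ENNReal.ofReal (a ^ ε) * (‖f (a, a ^ (-2 : ℤ) * T)‖₊ : ℝ≥0∞) ^ 2)
          * ENNReal.ofReal a⁻¹)
      ≤ (∫⁻ a in Ioc (0:ℝ) a₁,
          ENNReal.ofReal (a ^ ((2:ℝ) + ε) * (((⌊T₁ / ((p : ℝ) * a ^ 2)⌋ : ℤ) : ℝ) + 1)) *
            (∫⁻ t in Ioc (0:ℝ) (p : ℝ), (‖f (a, t)‖₊ : ℝ≥0∞) ^ 2) * ENNReal.ofReal a⁻¹) := by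
  have hp' : (0:ℝ) < (p : ℝ) := by exact_mod_cast hp
  -- the common pointwise analysis, for a fixed `a ∈ Ioc 0 a₁`
  have key : ∀ a ∈ Ioc (0:ℝ) a₁,
      (ENNReal.ofReal (a ^ ((2:ℝ) + ε) * ((⌊T₁ / ((p : ℝ) * a ^ 2)⌋ : ℤ) : ℝ)) *
          (∫⁻ t in Ioc (0:ℝ) (p : ℝ), (‖f (a, t)‖₊ : ℝ≥0∞) ^ 2)
        ≤ (∫⁻ T in Ioc (0:ℝ) T₁,
            ENNReal.ofReal (a ^ ε) * (‖f (a, a ^ (-2 : ℤ) * T)‖₊ : ℝ≥0∞) ^ 2)) ∧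
      ((∫⁻ T in Ioc (0:ℝ) T₁,
            ENNReal.ofReal (a ^ ε) * (‖f (a, a ^ (-2 : ℤ) * T)‖₊ : ℝ≥0∞) ^ 2)
        ≤ ENNReal.ofReal (a ^ ((2:ℝ) + ε) * (((⌊T₁ / ((p : ℝ) * a ^ 2)⌋ : ℤ) : ℝ) + 1)) *
            (∫⁻ t in Ioc (0:ℝ) (p : ℝ), (‖f (a, t)‖₊ : ℝ≥0∞) ^ 2)) := by
    rintro a ⟨ha, _⟩
    set g : ℝ → ℝ≥0∞ := fun t => (‖f (a, t)‖₊ : ℝ≥0∞) ^ 2 with hgdef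
    have hg : Measurable g :=
      (measurable_coe_nnreal_ennreal.comp ((hf.comp measurable_prodMk_left).nnnorm)).pow_const 2
    have hper' : ∀ t, g (t + (p : ℝ)) = g t := fun t => by
      simp only [hgdef, hper a ha t]
    set c : ℝ := a ^ (-2 : ℤ) with hcdef
    have hc2 : c = (a ^ 2)⁻¹ := by
      rw [hcdef, zpow_neg]; norm_cast
    have hc : 0 < c := by rw [hc2]; positivity
    set L : ℝ := c * T₁ with hLdef
    have hL : 0 < L := mul_pos hc hT₁
    have hLdiv : L / (p : ℝ) = T₁ / ((p : ℝ) * a ^ 2) := by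
      rw [hLdef, hc2]; field_simp
    set I : ℝ≥0∞ := ∫⁻ t in Ioc (0:ℝ) (p : ℝ), g t with hIdef
    set J : ℝ≥0∞ := ∫⁻ t in Ioc (0:ℝ) L, g t with hJdef
    set N : ℕ := ⌊L / (p : ℝ)⌋.toNat with hNdef
    have hkey := aux_key g (p : ℝ) hp' hper' L hL
    have hfl0 : (0:ℤ) ≤ ⌊L / (p : ℝ)⌋ := Int.floor_nonneg.2 (by positivity)
    have hNcast : ((N : ℝ)) = ((⌊T₁ / ((p : ℝ) * a ^ 2)⌋ : ℤ) : ℝ) := by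
      rw [← hLdiv]
      exact_mod_cast congrArg (Int.cast : ℤ → ℝ) (Int.toNat_of_nonneg hfl0)
    -- compute the inner integral
    have hinner : (∫⁻ T in Ioc (0:ℝ) T₁,
        ENNReal.ofReal (a ^ ε) * (‖f (a, a ^ (-2 : ℤ) * T)‖₊ : ℝ≥0∞) ^ 2)
        = ENNReal.ofReal (a ^ ε) * (ENNReal.ofReal (a ^ 2) * J) := by
      have h1 : (∫⁻ T in Ioc (0:ℝ) T₁,
          ENNReal.ofReal (a ^ ε) * (‖f (a, a ^ (-2 : ℤ) * T)‖₊ : ℝ≥0∞) ^ 2)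
          = ENNReal.ofReal (a ^ ε) * ∫⁻ T in Ioc (0:ℝ) T₁, g (c * T) :=
        lintegral_const_mul' _ _ ENNReal.ofReal_ne_top
      rw [h1, aux_scale g hg c T₁ hc, hc2, inv_inv, hJdef, hLdef, hc2]
    -- rewrite the constants
    have hpow : a ^ ((2:ℝ) + ε) = a ^ 2 * a ^ ε := by
      rw [Real.rpow_add ha, Real.rpow_two]
    have hI0 : (0:ℝ) ≤ ((⌊T₁ / ((p : ℝ) * a ^ 2)⌋ : ℤ) : ℝ) := by
      rw [← hNcast]; positivity
    have hCn : ENNReal.ofReal (a ^ ((2:ℝ) + ε) * ((⌊T₁ / ((p : ℝ) * a ^ 2)⌋ : ℤ) : ℝ))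
        = ENNReal.ofReal (a ^ ε) * (ENNReal.ofReal (a ^ 2) * (N : ℝ≥0∞)) := by
      rw [hpow, ← hNcast, ENNReal.ofReal_mul (by positivity), ENNReal.ofReal_mul (by positivity),
        ENNReal.ofReal_natCast]
      ring
    have hCn1 : ENNReal.ofReal (a ^ ((2:ℝ) + ε) * (((⌊T₁ / ((p : ℝ) * a ^ 2)⌋ : ℤ) : ℝ) + 1))
        = ENNReal.ofReal (a ^ ε) * (ENNReal.ofReal (a ^ 2) * ((N : ℝ≥0∞) + 1)) := by
      rw [hpow, ← hNcast, ENNReal.ofReal_mul (by positivity), ENNReal.ofReal_mul (by positivity),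
        ENNReal.ofReal_add (by positivity) zero_le_one, ENNReal.ofReal_natCast,
        ENNReal.ofReal_one]
      ring
    constructor
    · rw [hinner, hCn, mul_assoc, mul_assoc]
      exact mul_le_mul_right (mul_le_mul_right hkey.1 _) _
    · rw [hinner, hCn1, mul_assoc, mul_assoc]
      exact mul_le_mul_right (mul_le_mul_right hkey.2 _) _
  constructor
  · refine setLIntegral_mono' measurableSet_Ioc fun a ha => ?_
    exact mul_le_mul_left ((key a ha).1) _
  · refine setLIntegral_mono' measurableSet_Ioc fun a ha => ?_
    exact mul_le_mul_left ((key a ha).2) _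
end

section
/- Let p be a positive integer, T₁ ≠ 0, a₁ > 0 and ε ∈ ℝ. Let f : SL(2,ℝ) → ℂ be measurable, square-integrable on compact sets, with f(x n_p) = f(x) for all x ∈ SL(2,ℝ). Then, as inequalities in [0,∞], ∫₀^{2π} ∫₀^{a₁} a^{2+ε} ⌊|T₁|/(p a²)⌋ (∫₀^{p} |f(k_θ d_a n_t)|² dt) da/a dθ ≤ ‖f‖²_{T₁,a₁⁻,ε} ≤ ∫₀^{2π} ∫₀^{a₁} a^{2+ε} (⌊|T₁|/(p a²)⌋ + 1) (∫₀^{p} |f(k_θ d_a n_t)|² dt) da/a dθ. -/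
open MeasureTheory Real Set
open scoped ENNReal NNReal

noncomputable section

abbrev SL2 := Matrix.SpecialLinearGroup (Fin 2) ℝ

instance : TopologicalSpace SL2 :=
  inferInstanceAs (TopologicalSpace {A : Matrix (Fin 2) (Fin 2) ℝ // A.det = 1})
instance : MeasurableSpace SL2 := borel SL2

/-- The rotation `k_θ = [[cos θ, −sin θ],[sin θ, cos θ]]`. -/
def kRot (θ : ℝ) : SL2 :=
  ⟨!![Real.cos θ, -Real.sin θ; Real.sin θ, Real.cos θ], by
    simp [Matrix.det_fin_two_of]
    nlinarith [Real.sin_sq_add_cos_sq θ]⟩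

/-- The diagonal element `d_a = [[a,0],[0,a⁻¹]]` (junk value `1` when `a = 0`). -/
def dMat (a : ℝ) : SL2 :=
  if h : a ≠ 0 then ⟨!![a, 0; 0, a⁻¹], by simp [Matrix.det_fin_two_of, mul_inv_cancel₀ h]⟩
  else 1

/-- The unipotent element `n_t = [[1,t],[0,1]]`. -/
def nMat (t : ℝ) : SL2 := ⟨!![1, t; 0, 1], by simp [Matrix.det_fin_two_of]⟩

/-- Local square-integrability of `f : SL2 → ℂ`, expressed in the `KNA` coordinates
`(θ, T, a) ↦ k_θ n_T d_a` (which parametrize all of `SL(2,ℝ)`, with `a > 0`). -/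
def LocSqInt (f : SL2 → ℂ) : Prop :=
  ∀ K : Set (ℝ × ℝ × ℝ), IsCompact K → K ⊆ {q | 0 < q.2.2} →
    IntegrableOn (fun q : ℝ × ℝ × ℝ => ‖f (kRot q.1 * nMat q.2.1 * dMat q.2.2)‖ ^ 2) K volume

/-- The squared norm `‖f‖²_{T₁,a₁⁻,ε}`:
`∫₀^{2π} ∫₀^{a₁} ∫_{I(T₁)} |f(k_θ n_T d_a)|² a^ε dT (da/a) dθ`, valued in `[0,∞]`,
where `I(T₁)` is the interval between `0` and `T₁`. -/
def normMinusSq (f : SL2 → ℂ) (T₁ a₁ ε : ℝ) : ℝ≥0∞ :=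
  ∫⁻ θ in Ioc (0:ℝ) (2 * π), ∫⁻ a in Ioc (0:ℝ) a₁,
    (∫⁻ T in uIcc (0:ℝ) T₁,
      (‖f (kRot θ * nMat T * dMat a)‖₊ : ℝ≥0∞) ^ 2 * ENNReal.ofReal (a ^ ε))
      * ENNReal.ofReal a⁻¹


section Aux

lemma shift_Ioc (g : ℝ → ℝ≥0∞) (c a b : ℝ) :
    ∫⁻ t in Ioc a b, g (t + c) = ∫⁻ t in Ioc (a + c) (b + c), g t := by
  have h := (measurePreserving_add_right (volume : Measure ℝ) c).setLIntegral_comp_preimage_emb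
    (measurableEmbedding_addRight c) g (Ioc (a + c) (b + c))
  have hpre : (· + c) ⁻¹' Ioc (a + c) (b + c) = Ioc a b := by
    ext x; simp only [mem_preimage, mem_Ioc]; constructor <;> intro hx <;>
      exact ⟨by linarith [hx.1], by linarith [hx.2]⟩
  rwa [hpre] at h

lemma reflect (g : ℝ → ℝ≥0∞) (a b : ℝ) :
    ∫⁻ t in Ico (-b) (-a), g (-t) = ∫⁻ t in Ioc a b, g t := by
  have h := (Measure.measurePreserving_neg (volume : Measure ℝ)).setLIntegral_comp_preimage_emb
    measurableEmbedding_neg g (Ioc a b)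
  have hpre : (Neg.neg : ℝ → ℝ) ⁻¹' Ioc a b = Ico (-b) (-a) := by
    ext x; simp only [mem_preimage, mem_Ioc, mem_Ico]; constructor <;> intro hx <;>
      exact ⟨by linarith [hx.1, hx.2], by linarith [hx.1, hx.2]⟩
  rwa [hpre] at h

variable {g : ℝ → ℝ≥0∞} {P : ℝ}

lemma periodN (hper : ∀ t, g (t + P) = g t) : ∀ (k : ℕ) (t : ℝ), g (t + k * P) = g t := by
  intro k
  induction k with
  | zero => simp
  | succ k ih =>
    intro t
    have : t + (k + 1 : ℕ) * P = (t + k * P) + P := by push_cast; ring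
    rw [this, hper, ih]

lemma multInt (hP : 0 < P) (hper : ∀ t, g (t + P) = g t) :
    ∀ k : ℕ, ∫⁻ t in Ioc 0 ((k : ℝ) * P), g t = k * ∫⁻ t in Ioc (0:ℝ) P, g t := by
  intro k
  induction k with
  | zero => simp
  | succ k ih =>
    have hsplit : Ioc (0:ℝ) ((k:ℝ) * P) ∪ Ioc ((k:ℝ) * P) (((k+1:ℕ) : ℝ) * P)
        = Ioc (0:ℝ) (((k+1:ℕ):ℝ) * P) := by
      apply Ioc_union_Ioc_eq_Ioc
      · positivity
      · push_cast; nlinarith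
    rw [← hsplit, lintegral_union measurableSet_Ioc
      (Set.Ioc_disjoint_Ioc_of_le le_rfl), ih]
    have h2 : ∫⁻ t in Ioc ((k:ℝ) * P) (((k+1:ℕ):ℝ) * P), g t = ∫⁻ t in Ioc (0:ℝ) P, g t := by
      have := shift_Ioc (fun t => g t) ((k:ℝ) * P) 0 P
      simp only [zero_add] at this
      have heq : (fun t : ℝ => g (t + (k:ℝ) * P)) = g := funext fun t => periodN hper k t
      rw [heq] at this
      rw [show (((k+1:ℕ):ℝ) * P) = P + (k:ℝ) * P by push_cast; ring, ← this]
    rw [h2]; push_cast; ring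

lemma posBound (hP : 0 < P) (hper : ∀ t, g (t + P) = g t) {L : ℝ} (hL : 0 ≤ L) :
    ((⌊L / P⌋.toNat : ℝ≥0∞) * ∫⁻ t in Ioc (0:ℝ) P, g t) ≤ (∫⁻ t in Ioc (0:ℝ) L, g t) ∧
    (∫⁻ t in Ioc (0:ℝ) L, g t) ≤ ((⌊L / P⌋.toNat : ℝ≥0∞) + 1) * ∫⁻ t in Ioc (0:ℝ) P, g t := by
  set n : ℕ := ⌊L / P⌋.toNat with hn
  have hfl : (n : ℝ) = (⌊L / P⌋ : ℝ) := by
    rw [hn]; exact_mod_cast Int.toNat_of_nonneg (Int.floor_nonneg.2 (by positivity))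
  have h1 : (n : ℝ) * P ≤ L := by
    rw [hfl]
    calc (⌊L / P⌋ : ℝ) * P ≤ (L / P) * P := by
          exact mul_le_mul_of_nonneg_right (Int.floor_le _) hP.le
      _ = L := by field_simp
  have h2 : L ≤ ((n : ℝ) + 1) * P := by
    rw [hfl]
    have := (Int.lt_floor_add_one (L / P)).le
    calc L = (L / P) * P := by field_simp
      _ ≤ ((⌊L / P⌋ : ℝ) + 1) * P := mul_le_mul_of_nonneg_right this hP.le
  constructor
  · rw [← multInt hP hper n]
    exact lintegral_mono_set (Ioc_subset_Ioc_right h1)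
  · have : ((n : ℝ≥0∞) + 1) * ∫⁻ t in Ioc (0:ℝ) P, g t
        = ∫⁻ t in Ioc (0:ℝ) (((n + 1 : ℕ) : ℝ) * P), g t := by
      rw [multInt hP hper (n+1)]; push_cast; ring
    rw [this]
    apply lintegral_mono_set
    apply Ioc_subset_Ioc_right
    push_cast; linarith

lemma mainBound (hP : 0 < P) (hper : ∀ t, g (t + P) = g t) (T : ℝ) :
    ((⌊|T| / P⌋.toNat : ℝ≥0∞) * ∫⁻ t in Ioc (0:ℝ) P, g t) ≤ (∫⁻ t in uIcc (0:ℝ) T, g t) ∧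
    (∫⁻ t in uIcc (0:ℝ) T, g t) ≤ ((⌊|T| / P⌋.toNat : ℝ≥0∞) + 1) * ∫⁻ t in Ioc (0:ℝ) P, g t := by
  rcases le_or_gt 0 T with hT | hT
  · rw [uIcc_of_le hT, ← setLIntegral_congr (Ioc_ae_eq_Icc (μ := volume) (a := (0:ℝ)) (b := T)),
      abs_of_nonneg hT]
    exact posBound hP hper hT
  · have habs : |T| = -T := abs_of_neg hT
    rw [uIcc_of_ge hT.le, ← setLIntegral_congr (Ioc_ae_eq_Icc (μ := volume) (a := T) (b := (0:ℝ)))]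
    have hrefl : ∫⁻ t in Ioc T (0:ℝ), g t = ∫⁻ t in Ioc (0:ℝ) (-T), g (-t) := by
      rw [← reflect g T 0, neg_zero]
      exact setLIntegral_congr Ico_ae_eq_Ioc
    rw [hrefl, habs]
    have hper' : ∀ t, g (-(t + P)) = g (-t) := by
      intro t
      have := hper (-t - P)
      rw [sub_add_cancel] at this
      rw [show -(t + P) = -t - P by ring, this]
    have hEq : ∫⁻ t in Ioc (0:ℝ) P, g (-t) = ∫⁻ t in Ioc (0:ℝ) P, g t := by
      have r1 : ∫⁻ t in Ico (-(0:ℝ)) (-(-P)), g (-t) = ∫⁻ t in Ioc (-P) (0:ℝ), g t :=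
        reflect g (-P) 0
      simp only [neg_zero, neg_neg] at r1
      have r3 : ∫⁻ t in Ioc (-P) (0:ℝ), g (t + P) = ∫⁻ t in Ioc (-P + P) ((0:ℝ) + P), g t :=
        shift_Ioc g P (-P) 0
      have hfun : (fun t : ℝ => g (t + P)) = g := funext hper
      rw [hfun] at r3
      simp only [neg_add_cancel, zero_add] at r3
      rw [(setLIntegral_congr Ico_ae_eq_Ioc).symm, r1, r3]
    have hpos := posBound (g := fun t => g (-t)) hP hper' (by linarith : (0:ℝ) ≤ -T)
    rw [hEq] at hpos
    exact hpos

lemma scaleInt (g : ℝ → ℝ≥0∞) {c : ℝ} (hc : 0 < c) (T₁ : ℝ) :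
    ∫⁻ t in uIcc (0:ℝ) T₁, g (t / c) = ENNReal.ofReal c * ∫⁻ t in uIcc (0:ℝ) (T₁ / c), g t := by
  have hφ : MeasurableEmbedding (fun x : ℝ => c * x) := measurableEmbedding_mulLeft₀ hc.ne'
  have hmap : Measure.map (fun x : ℝ => c * x) volume = ENNReal.ofReal |c⁻¹| • volume :=
    Real.map_volume_mul_left hc.ne'
  have key : ∫⁻ y in uIcc (0:ℝ) T₁, g (y / c) ∂(Measure.map (fun x : ℝ => c * x) volume)
      = ∫⁻ x in (fun x : ℝ => c * x) ⁻¹' uIcc (0:ℝ) T₁, g ((c * x) / c) := by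
    rw [hφ.restrict_map, hφ.lintegral_map]
  have hpre : (fun x : ℝ => c * x) ⁻¹' uIcc (0:ℝ) T₁ = uIcc (0:ℝ) (T₁ / c) := by
    rw [Set.preimage_const_mul_uIcc hc.ne']
    norm_num
  have hsimp : (fun x : ℝ => g ((c * x) / c)) = g := by
    funext x; rw [mul_div_cancel_left₀ _ hc.ne']
  rw [hpre] at key
  rw [hmap] at key
  rw [Measure.restrict_smul, lintegral_smul_measure] at key
  have key2 : ENNReal.ofReal c⁻¹ * ∫⁻ y in uIcc (0:ℝ) T₁, g (y / c)
      = ∫⁻ x in uIcc (0:ℝ) (T₁ / c), g x := by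
    rw [← abs_of_pos (inv_pos.2 hc), ← smul_eq_mul, key]
    simp only [hsimp]
  rw [← key2, ← mul_assoc, ← ENNReal.ofReal_mul hc.le, mul_inv_cancel₀ hc.ne']
  simp

end Aux

lemma nMat_mul_dMat {a : ℝ} (ha : a ≠ 0) (T : ℝ) :
    nMat T * dMat a = dMat a * nMat (T / a ^ 2) := by
  have hd : dMat a = ⟨!![a, 0; 0, a⁻¹], by simp [Matrix.det_fin_two_of, mul_inv_cancel₀ ha]⟩ :=
    dif_pos ha
  apply Subtype.ext
  simp only [Matrix.SpecialLinearGroup.coe_mul]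
  rw [hd]
  simp only [Matrix.SpecialLinearGroup.coe_mul, nMat, dMat, dif_pos ha]
  ext i j
  fin_cases i <;> fin_cases j <;>
    simp [Matrix.mul_apply, Fin.sum_univ_two] <;> field_simp <;> ring

lemma nMat_add (s t : ℝ) : nMat (s + t) = nMat s * nMat t := by
  apply Subtype.ext
  simp only [Matrix.SpecialLinearGroup.coe_mul]
  simp only [Matrix.SpecialLinearGroup.coe_mul, nMat]
  ext i j
  fin_cases i <;> fin_cases j <;> simp [Matrix.mul_apply, Fin.sum_univ_two] <;> ring

/-- for a measurable, locally square-integrable `f : SL(2,ℝ) → ℂ` that is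
right `N_p`-periodic, the norm `‖f‖²_{T₁,a₁⁻,ε}` is squeezed between the two Siegel-type
integrals in the `KAN` coordinates, with floor coefficients `⌊|T₁|/(p a²)⌋` and
`⌊|T₁|/(p a²)⌋ + 1`. -/
theorem stmt1 (p : ℕ) (hp : 0 < p) (T₁ : ℝ) (hT₁ : T₁ ≠ 0) (a₁ : ℝ) (ha₁ : 0 < a₁) (ε : ℝ)
    (f : SL2 → ℂ) (hf : Measurable f) (hloc : LocSqInt f)
    (hper : ∀ x : SL2, f (x * nMat (p : ℝ)) = f x) :
    (∫⁻ θ in Ioc (0:ℝ) (2 * π), ∫⁻ a in Ioc (0:ℝ) a₁,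
        ENNReal.ofReal (a ^ ((2:ℝ) + ε) * ((⌊|T₁| / ((p : ℝ) * a ^ 2)⌋ : ℤ) : ℝ)) *
          (∫⁻ t in Ioc (0:ℝ) (p : ℝ), (‖f (kRot θ * dMat a * nMat t)‖₊ : ℝ≥0∞) ^ 2) *
          ENNReal.ofReal a⁻¹)
      ≤ normMinusSq f T₁ a₁ ε ∧
    normMinusSq f T₁ a₁ ε
      ≤ (∫⁻ θ in Ioc (0:ℝ) (2 * π), ∫⁻ a in Ioc (0:ℝ) a₁,
          ENNReal.ofReal (a ^ ((2:ℝ) + ε) * (((⌊|T₁| / ((p : ℝ) * a ^ 2)⌋ : ℤ) : ℝ) + 1)) *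
            (∫⁻ t in Ioc (0:ℝ) (p : ℝ), (‖f (kRot θ * dMat a * nMat t)‖₊ : ℝ≥0∞) ^ 2) *
            ENNReal.ofReal a⁻¹) := by
  have hP : (0:ℝ) < (p:ℝ) := by exact_mod_cast hp
  -- pointwise inequality machinery
  have main : ∀ (θ a : ℝ), 0 < a →
      (ENNReal.ofReal (a ^ ((2:ℝ) + ε) * ((⌊|T₁| / ((p : ℝ) * a ^ 2)⌋ : ℤ) : ℝ)) *
          (∫⁻ t in Ioc (0:ℝ) (p : ℝ), (‖f (kRot θ * dMat a * nMat t)‖₊ : ℝ≥0∞) ^ 2) *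
          ENNReal.ofReal a⁻¹
        ≤ (∫⁻ T in uIcc (0:ℝ) T₁,
            (‖f (kRot θ * nMat T * dMat a)‖₊ : ℝ≥0∞) ^ 2 * ENNReal.ofReal (a ^ ε))
            * ENNReal.ofReal a⁻¹) ∧
      ((∫⁻ T in uIcc (0:ℝ) T₁,
            (‖f (kRot θ * nMat T * dMat a)‖₊ : ℝ≥0∞) ^ 2 * ENNReal.ofReal (a ^ ε))
            * ENNReal.ofReal a⁻¹
        ≤ ENNReal.ofReal (a ^ ((2:ℝ) + ε) * (((⌊|T₁| / ((p : ℝ) * a ^ 2)⌋ : ℤ) : ℝ) + 1)) *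
          (∫⁻ t in Ioc (0:ℝ) (p : ℝ), (‖f (kRot θ * dMat a * nMat t)‖₊ : ℝ≥0∞) ^ 2) *
          ENNReal.ofReal a⁻¹) := by
    intro θ a ha
    set g : ℝ → ℝ≥0∞ := fun t => (‖f (kRot θ * dMat a * nMat t)‖₊ : ℝ≥0∞) ^ 2 with hg
    set I : ℝ≥0∞ := ∫⁻ t in Ioc (0:ℝ) (p:ℝ), g t with hI
    have ha2 : (0:ℝ) < a ^ 2 := by positivity
    have hper_g : ∀ t, g (t + (p:ℝ)) = g t := by
      intro t
      simp only [hg, nMat_add t (p:ℝ), ← mul_assoc, hper]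
    -- the key equality for the middle integral
    have hE : (∫⁻ T in uIcc (0:ℝ) T₁,
          (‖f (kRot θ * nMat T * dMat a)‖₊ : ℝ≥0∞) ^ 2 * ENNReal.ofReal (a ^ ε))
        = ENNReal.ofReal (a ^ 2) * (∫⁻ t in uIcc (0:ℝ) (T₁ / a ^ 2), g t)
            * ENNReal.ofReal (a ^ ε) := by
      rw [lintegral_mul_const' _ _ ENNReal.ofReal_ne_top]
      have hfun : (fun T : ℝ => (‖f (kRot θ * nMat T * dMat a)‖₊ : ℝ≥0∞) ^ 2)
          = fun T : ℝ => g (T / a ^ 2) := by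
        funext T
        rw [hg]
        simp only [mul_assoc, nMat_mul_dMat ha.ne' T]
      rw [hfun, scaleInt g ha2 T₁]
    set n : ℕ := ⌊|T₁| / ((p:ℝ) * a ^ 2)⌋.toNat with hn
    have hx : |T₁ / a ^ 2| / (p:ℝ) = |T₁| / ((p:ℝ) * a ^ 2) := by
      rw [abs_div, abs_of_pos ha2, div_div, mul_comm]
    have hnonneg : (0:ℝ) ≤ |T₁| / ((p:ℝ) * a ^ 2) := by positivity
    have hcast : ((⌊|T₁| / ((p : ℝ) * a ^ 2)⌋ : ℤ) : ℝ) = (n : ℝ) := by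
      rw [hn]
      exact_mod_cast (Int.toNat_of_nonneg (Int.floor_nonneg.2 hnonneg)).symm
    have hbound := mainBound hP hper_g (T₁ / a ^ 2)
    rw [hx, ← hn, ← hI] at hbound
    have h2e : a ^ ((2:ℝ) + ε) = a ^ 2 * a ^ ε := by
      rw [Real.rpow_add ha, show ((2:ℝ)) = ((2:ℕ):ℝ) by norm_num, Real.rpow_natCast]
    constructor
    · rw [hE]
      have hco : ENNReal.ofReal (a ^ ((2:ℝ) + ε) * ((⌊|T₁| / ((p : ℝ) * a ^ 2)⌋ : ℤ) : ℝ))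
          = ENNReal.ofReal (a ^ 2) * ENNReal.ofReal (a ^ ε) * (n : ℝ≥0∞) := by
        rw [hcast, h2e, ENNReal.ofReal_mul (by positivity), ENNReal.ofReal_mul (by positivity),
          ENNReal.ofReal_natCast]
      rw [hco]
      calc ENNReal.ofReal (a ^ 2) * ENNReal.ofReal (a ^ ε) * (n : ℝ≥0∞) * I
            * ENNReal.ofReal a⁻¹
          = ENNReal.ofReal (a ^ 2) * ((n : ℝ≥0∞) * I) * ENNReal.ofReal (a ^ ε)
            * ENNReal.ofReal a⁻¹ := by ring
        _ ≤ ENNReal.ofReal (a ^ 2) * (∫⁻ t in uIcc (0:ℝ) (T₁ / a ^ 2), g t)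
            * ENNReal.ofReal (a ^ ε) * ENNReal.ofReal a⁻¹ := by
            gcongr
            exact hbound.1
    · rw [hE]
      have hco : ENNReal.ofReal (a ^ ((2:ℝ) + ε) * (((⌊|T₁| / ((p : ℝ) * a ^ 2)⌋ : ℤ) : ℝ) + 1))
          = ENNReal.ofReal (a ^ 2) * ENNReal.ofReal (a ^ ε) * ((n : ℝ≥0∞) + 1) := by
        rw [hcast, h2e, ENNReal.ofReal_mul (by positivity), ENNReal.ofReal_mul (by positivity),
          ENNReal.ofReal_add (by positivity) zero_le_one, ENNReal.ofReal_natCast,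
          ENNReal.ofReal_one]
      rw [hco]
      calc ENNReal.ofReal (a ^ 2) * (∫⁻ t in uIcc (0:ℝ) (T₁ / a ^ 2), g t)
            * ENNReal.ofReal (a ^ ε) * ENNReal.ofReal a⁻¹
          ≤ ENNReal.ofReal (a ^ 2) * (((n : ℝ≥0∞) + 1) * I) * ENNReal.ofReal (a ^ ε)
            * ENNReal.ofReal a⁻¹ := by
            gcongr
            exact hbound.2
        _ = ENNReal.ofReal (a ^ 2) * ENNReal.ofReal (a ^ ε) * ((n : ℝ≥0∞) + 1) * I
            * ENNReal.ofReal a⁻¹ := by ring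
  have hzero : ∀ a : ℝ, a ≤ 0 → ENNReal.ofReal a⁻¹ = 0 := by
    intro a ha
    rw [ENNReal.ofReal_eq_zero]
    exact inv_nonpos.2 ha
  constructor
  · apply lintegral_mono
    intro θ
    apply lintegral_mono
    intro a
    rcases le_or_gt a 0 with ha | ha
    · simp [hzero a ha]
    · exact (main θ a ha).1
  · apply lintegral_mono
    intro θ
    apply lintegral_mono
    intro a
    rcases le_or_gt a 0 with ha | ha
    · simp [hzero a ha]
    · exact (main θ a ha).2
end
end
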